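/- For every ς, ζ ≥ 1 with ς + ζ > 2 there exists a constant K > 0 such that, for every ε ∈ (0,1) and every r ∈ ℝ, Ψ_{ς,ε}'(r) · Ψ_{ζ,ε}'(r) ≥ K · Ψ_{ς+ζ-2,ε}''(r) − K^{-1}. -/

import Mathlib

open MeasureTheory Set

/-- degenerate mobility `m_ς(r) = (1-r²)^ς` on [-1,1], extended by 0. -/
noncomputable def mob (ς r : ℝ) : ℝ := if |r| ≤ 1 then (1 - r ^ 2) ^ ς else 0

/-- the standard bump `ρ(s) = exp(-1/(1-s²))` on (-1,1). -/
noncomputable def bump (s : ℝ) : ℝ := if |s| < 1 then Real.exp (-(1 - s ^ 2)⁻¹) else 0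

/-- normalisation constant `c_N`. -/
noncomputable def mollConst : ℝ := (∫ s, bump s)⁻¹

/-- mollifier `ρ_ε(s) = c_N ε⁻¹ ρ(s/ε)`. -/
noncomputable def moll (ε s : ℝ) : ℝ := mollConst * ε⁻¹ * bump (s / ε)

/-- regularised mobility `m_{ς,ε} = ρ_ε * m_ς + ε^ς`. -/
noncomputable def mobE (ς ε r : ℝ) : ℝ := (∫ s, moll ε s * mob ς (r - s)) + ε ^ ς

/-- `Ψ'_{ς,ε}(r) = ∫₀^r m_{ς,ε}(w)⁻¹ dw`. -/
noncomputable def psiE' (ς ε r : ℝ) : ℝ := ∫ w in (0:ℝ)..r, (mobE ς ε w)⁻¹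

lemma bump_nonneg (s : ℝ) : 0 ≤ bump s := by
  unfold bump; split
  · positivity
  · exact le_refl 0

lemma bump_le_one (s : ℝ) : bump s ≤ 1 := by
  unfold bump; split
  · rename_i h
    have hs : s ^ 2 < 1 := by nlinarith [sq_abs s, abs_nonneg s]
    have : (0:ℝ) ≤ (1 - s ^ 2)⁻¹ := by
      have : (0:ℝ) < 1 - s ^ 2 := by linarith
      positivity
    calc Real.exp (-(1 - s ^ 2)⁻¹) ≤ Real.exp 0 := Real.exp_le_exp.2 (by linarith)
      _ = 1 := Real.exp_zero
  · norm_num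

lemma bump_measurable : Measurable bump := by
  unfold bump
  refine Measurable.ite ?_ ?_ measurable_const
  · exact measurableSet_lt measurable_abs measurable_const
  · exact (((measurable_const.sub ((measurable_id.pow_const 2))).inv).neg).exp

lemma bump_integrable : Integrable bump := by
  refine Integrable.mono' (g := (Icc (-1:ℝ) 1).indicator (fun _ => (1:ℝ)))
    ?_ bump_measurable.aestronglyMeasurable ?_
  · exact (integrable_indicator_iff measurableSet_Icc).2
      (integrableOn_const measure_Icc_lt_top.ne)
  · filter_upwards with s
    rw [Real.norm_eq_abs, abs_of_nonneg (bump_nonneg s)]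
    by_cases h : |s| < 1
    · have : s ∈ Icc (-1:ℝ) 1 := by
        rcases abs_lt.1 h with ⟨h1, h2⟩; exact ⟨by linarith, by linarith⟩
      rw [indicator_of_mem this]; exact bump_le_one s
    · unfold bump; rw [if_neg h]
      exact indicator_nonneg (by norm_num) s

lemma bump_integral_pos : 0 < ∫ s, bump s := by
  rw [integral_pos_iff_support_of_nonneg bump_nonneg bump_integrable]
  have hsub : Ioo (-1:ℝ) 1 ⊆ Function.support bump := by
    intro s hs
    have h1 : |s| < 1 := abs_lt.mpr ⟨hs.1, hs.2⟩
    simp only [Function.mem_support, bump, if_pos h1]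
    exact (Real.exp_pos _).ne'
  calc (0:ENNReal) < volume (Ioo (-1:ℝ) 1) := by
        rw [Real.volume_Ioo]; exact ENNReal.ofReal_pos.2 (by norm_num)
    _ ≤ volume (Function.support bump) := measure_mono hsub

lemma mollConst_pos : 0 < mollConst := inv_pos.2 bump_integral_pos

lemma moll_nonneg {ε : ℝ} (hε : 0 < ε) (s : ℝ) : 0 ≤ moll ε s :=
  mul_nonneg (mul_nonneg mollConst_pos.le (inv_nonneg.2 hε.le)) (bump_nonneg _)

lemma moll_integrable {ε : ℝ} (hε : 0 < ε) : Integrable (moll ε) :=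
  (bump_integrable.comp_div hε.ne').const_mul _

lemma moll_integral {ε : ℝ} (hε : 0 < ε) : ∫ s, moll ε s = 1 := by
  unfold moll
  rw [integral_const_mul, MeasureTheory.Measure.integral_comp_div bump ε, abs_of_pos hε,
    smul_eq_mul, ← mul_assoc, mul_assoc mollConst, inv_mul_cancel₀ hε.ne', mul_one]
  exact inv_mul_cancel₀ bump_integral_pos.ne'

lemma moll_eq_zero {ε s : ℝ} (hε : 0 < ε) (h : ε ≤ |s|) : moll ε s = 0 := by
  unfold moll
  have : ¬ |s / ε| < 1 := by
    rw [abs_div, abs_of_pos hε, not_lt]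
    exact (one_le_div hε).2 h
  rw [bump, if_neg this, mul_zero]

lemma mob_nonneg (a r : ℝ) : 0 ≤ mob a r := by
  unfold mob; split
  · rename_i h
    have : (0:ℝ) ≤ 1 - r ^ 2 := by nlinarith [sq_abs r, abs_nonneg r]
    exact Real.rpow_nonneg this a
  · exact le_refl 0

lemma mob_le_one {a : ℝ} (ha : 0 ≤ a) (r : ℝ) : mob a r ≤ 1 := by
  unfold mob; split
  · rename_i h
    have h0 : (0:ℝ) ≤ 1 - r ^ 2 := by nlinarith [sq_abs r, abs_nonneg r]
    exact Real.rpow_le_one h0 (by nlinarith [sq_nonneg r]) ha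
  · norm_num

lemma mob_eq {a : ℝ} (ha : a ≠ 0) (r : ℝ) : mob a r = (max (1 - r ^ 2) 0) ^ a := by
  unfold mob; split
  · rename_i h
    rw [max_eq_left (by nlinarith [sq_abs r, abs_nonneg r])]
  · rename_i h
    rw [max_eq_right (by nlinarith [sq_abs r, abs_nonneg r, not_le.1 h]), Real.zero_rpow ha]

lemma mob_continuous {a : ℝ} (ha : 0 < a) : Continuous (mob a) := by
  have h : Continuous fun r : ℝ => max (1 - r ^ 2) 0 :=
    (continuous_const.sub (continuous_pow 2)).max continuous_const
  have h2 : Continuous fun r : ℝ => (max (1 - r ^ 2) 0) ^ a := by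
    rw [continuous_iff_continuousAt]
    intro x
    exact (Real.continuousAt_rpow_const _ _ (Or.inr ha.le)).comp h.continuousAt
  have : mob a = fun r : ℝ => (max (1 - r ^ 2) 0) ^ a := funext (mob_eq ha.ne')
  rw [this]; exact h2

lemma mob_hasCompactSupport (a : ℝ) : HasCompactSupport (mob a) := by
  refine HasCompactSupport.intro (isCompact_Icc (a := (-1:ℝ)) (b := 1)) ?_
  intro x hx
  have : ¬ |x| ≤ 1 := by
    rw [abs_le]; intro h; exact hx ⟨h.1, h.2⟩
  rw [mob, if_neg this]

lemma mob_even (a r : ℝ) : mob a (-r) = mob a r := by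
  unfold mob
  rw [abs_neg, neg_sq]

lemma moll_even (ε s : ℝ) : moll ε (-s) = moll ε s := by
  unfold moll bump
  rw [neg_div, abs_neg, neg_sq]

lemma conv_integrand_aesm {a : ℝ} (ha : 0 < a) (ε w : ℝ) :
    AEStronglyMeasurable (fun s => moll ε s * mob a (w - s)) volume := by
  refine Measurable.aestronglyMeasurable ?_
  exact ((bump_measurable.comp (measurable_id.div_const ε)).const_mul _).mul
    ((mob_continuous ha).measurable.comp (measurable_const.sub measurable_id))

lemma conv_integrand_integrable {a ε : ℝ} (ha : 0 < a) (hε : 0 < ε) (w : ℝ) :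
    Integrable (fun s => moll ε s * mob a (w - s)) := by
  refine Integrable.mono' (moll_integrable hε) (conv_integrand_aesm ha ε w) ?_
  filter_upwards with s
  rw [Real.norm_eq_abs, abs_of_nonneg (mul_nonneg (moll_nonneg hε s) (mob_nonneg a _))]
  exact mul_le_of_le_one_right (moll_nonneg hε s) (mob_le_one ha.le _)

lemma conv_nonneg {a ε : ℝ} (hε : 0 < ε) (w : ℝ) :
    0 ≤ ∫ s, moll ε s * mob a (w - s) :=
  integral_nonneg fun s => mul_nonneg (moll_nonneg hε s) (mob_nonneg a _)

lemma mobE_pos {a ε : ℝ} (hε : 0 < ε) (w : ℝ) : 0 < mobE a ε w :=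
  add_pos_of_nonneg_of_pos (conv_nonneg hε w) (Real.rpow_pos_of_pos hε a)

lemma mobE_le {a ε : ℝ} (ha : 0 < a) (hε : 0 < ε) (w : ℝ) :
    mobE a ε w ≤ (2 * (max (1 - |w|) 0 + ε)) ^ a + ε ^ a := by
  unfold mobE
  have key : ∫ s, moll ε s * mob a (w - s) ≤ (2 * (max (1 - |w|) 0 + ε)) ^ a := by
    have h1 : ∫ s, moll ε s * mob a (w - s)
        ≤ ∫ s, moll ε s * (2 * (max (1 - |w|) 0 + ε)) ^ a := by
      refine integral_mono (conv_integrand_integrable ha hε w)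
        ((moll_integrable hε).mul_const _) ?_
      intro s
      by_cases hs : moll ε s = 0
      · simp [hs]
      · have hsε : |s| < ε := by
          by_contra hc
          exact hs (moll_eq_zero hε (not_lt.1 hc))
        refine mul_le_mul_of_nonneg_left ?_ (moll_nonneg hε s)
        unfold mob; split
        · refine Real.rpow_le_rpow (by nlinarith [sq_abs (w - s), abs_nonneg (w - s)]) ?_ ha.le
          have h2 : |w| - |s| ≤ |w - s| := abs_sub_abs_le_abs_sub w s
          have h3 : (1:ℝ) - (w - s) ^ 2 ≤ 2 * (1 - |w - s|) := by
            nlinarith [sq_abs (w - s), sq_nonneg (|w - s| - 1)]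
          have h4 : (1:ℝ) - |w| ≤ max (1 - |w|) 0 := le_max_left _ _
          nlinarith
        · exact Real.rpow_nonneg (by positivity) a
    rw [integral_mul_const, moll_integral hε, one_mul] at h1
    exact h1
  linarith

lemma mobE_ge {a ε : ℝ} (ha : 0 < a) (hε : 0 < ε) (r : ℝ) :
    ((max (1 - |r|) 0 + ε) / 4) ^ a ≤ mobE a ε r := by
  set d := 1 - |r| with hd
  by_cases hcase : d ≤ 2 * ε
  · have hA : (max d 0 + ε) / 4 ≤ ε := by
      rcases le_total d 0 with h | h
      · rw [max_eq_right h]; linarith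
      · rw [max_eq_left h]; linarith
    calc ((max d 0 + ε) / 4) ^ a ≤ ε ^ a := Real.rpow_le_rpow (by positivity) hA ha.le
      _ ≤ mobE a ε r := le_add_of_nonneg_left (conv_nonneg hε r)
  · push_neg at hcase
    have hdpos : 0 < d := by linarith
    have hd1 : d ≤ 1 := by rw [hd]; nlinarith [abs_nonneg r]
    have key : (d / 2) ^ a ≤ ∫ s, moll ε s * mob a (r - s) := by
      have h1 : ∫ s, moll ε s * (d / 2) ^ a ≤ ∫ s, moll ε s * mob a (r - s) := by
        refine integral_mono ((moll_integrable hε).mul_const _)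
          (conv_integrand_integrable ha hε r) ?_
        intro s
        by_cases hs : moll ε s = 0
        · simp [hs]
        · have hsε : |s| < ε := by
            by_contra hc
            exact hs (moll_eq_zero hε (not_lt.1 hc))
          refine mul_le_mul_of_nonneg_left ?_ (moll_nonneg hε s)
          have habs : |r - s| ≤ 1 - d / 2 := by
            have := abs_sub (r) (s)
            calc |r - s| ≤ |r| + |s| := abs_sub _ _
              _ ≤ (1 - d) + ε := by rw [hd]; linarith [hsε.le]
              _ ≤ 1 - d / 2 := by linarith
          rw [mob, if_pos (by linarith : |r - s| ≤ 1)]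
          refine Real.rpow_le_rpow (by positivity) ?_ ha.le
          nlinarith [sq_abs (r - s), abs_nonneg (r - s)]
      rw [integral_mul_const, moll_integral hε, one_mul] at h1
      exact h1
    have h2 : ((max d 0 + ε) / 4) ^ a ≤ (d / 2) ^ a := by
      refine Real.rpow_le_rpow (by positivity) ?_ ha.le
      rw [max_eq_left hdpos.le]; linarith
    calc ((max d 0 + ε) / 4) ^ a ≤ (d / 2) ^ a := h2
      _ ≤ ∫ s, moll ε s * mob a (r - s) := key
      _ ≤ mobE a ε r := le_add_of_nonneg_right (Real.rpow_pos_of_pos hε a).le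

lemma mobE_continuous {a ε : ℝ} (ha : 0 < a) (hε : 0 < ε) : Continuous (mobE a ε) := by
  have hconv : (fun r => ∫ s, moll ε s * mob a (r - s))
      = MeasureTheory.convolution (moll ε) (mob a) (ContinuousLinearMap.mul ℝ ℝ) volume := by
    funext r
    rw [MeasureTheory.convolution_def]
    simp only [ContinuousLinearMap.mul_apply']
  have : Continuous fun r => ∫ s, moll ε s * mob a (r - s) := by
    rw [hconv]
    exact (mob_hasCompactSupport a).continuous_convolution_right _
      (moll_integrable hε).locallyIntegrable (mob_continuous ha)
  unfold mobE
  exact this.add continuous_const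

lemma mobE_even (a ε r : ℝ) : mobE a ε (-r) = mobE a ε r := by
  unfold mobE
  congr 1
  calc ∫ s, moll ε s * mob a (-r - s)
      = ∫ s, moll ε (-s) * mob a (-r - -s) := (integral_neg_eq_self _ _).symm
    _ = ∫ s, moll ε s * mob a (r - s) := by
        congr 1; funext s
        rw [moll_even]
        congr 1
        rw [show -r - -s = -(r - s) by ring, mob_even]

lemma inv_mobE_continuous {a ε : ℝ} (ha : 0 < a) (hε : 0 < ε) :
    Continuous fun w => (mobE a ε w)⁻¹ :=
  (mobE_continuous ha hε).inv₀ fun w => (mobE_pos hε w).ne'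

lemma psiE'_neg {a ε : ℝ} (r : ℝ) : psiE' a ε (-r) = - psiE' a ε r := by
  calc psiE' a ε (-r) = ∫ w in (0:ℝ)..(-r), (mobE a ε (-w))⁻¹ := by
        unfold psiE'; congr 1; funext w; rw [mobE_even]
    _ = ∫ w in (- -r)..(-0:ℝ), (mobE a ε w)⁻¹ :=
        intervalIntegral.integral_comp_neg fun w => (mobE a ε w)⁻¹
    _ = - psiE' a ε r := by
        rw [neg_neg, neg_zero, intervalIntegral.integral_symm]; rfl

lemma psiE'_nonneg {a ε r : ℝ} (hε : 0 < ε) (hr : 0 ≤ r) : 0 ≤ psiE' a ε r :=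
  intervalIntegral.integral_nonneg hr fun u _ => (inv_nonneg.2 (mobE_pos hε u).le)

lemma psiE'_mul_nonneg {a b ε : ℝ} (hε : 0 < ε) (r : ℝ) :
    0 ≤ psiE' a ε r * psiE' b ε r := by
  rcases le_total 0 r with h | h
  · exact mul_nonneg (psiE'_nonneg hε h) (psiE'_nonneg hε h)
  · have h1 : ∀ c : ℝ, psiE' c ε r ≤ 0 := by
      intro c
      have h2 : psiE' c ε r = - psiE' c ε (-r) := by rw [psiE'_neg, neg_neg]
      have h3 := psiE'_nonneg (a := c) hε (neg_nonneg.2 h)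
      linarith
    have := mul_nonneg (neg_nonneg.2 (h1 a)) (neg_nonneg.2 (h1 b))
    rwa [neg_mul_neg] at this

lemma max_one_sub_min (r ε : ℝ) : max (1 - r) 0 + ε = 1 - min r 1 + ε := by
  rcases le_total r 1 with h | h
  · rw [max_eq_left (by linarith), min_eq_left h]
  · rw [max_eq_right (by linarith), min_eq_right h]; ring

lemma psiE'_lb {a ε r : ℝ} (ha : 0 < a) (hε0 : 0 < ε) (hε1 : ε < 1)
    (hr : (1 + ε) / 2 ≤ r) :
    (2 * 4 ^ a)⁻¹ * (max (1 - r) 0 + ε) ^ (1 - a) ≤ psiE' a ε r := by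
  set r' := min r 1 with hr'def
  set A := max (1 - r) 0 + ε with hAdef
  have hA' : A = 1 - r' + ε := max_one_sub_min r ε
  have hr'le1 : r' ≤ 1 := min_le_right _ _
  have hr'ge : (1 + ε) / 2 ≤ r' := le_min hr (by linarith)
  have hr'r : r' ≤ r := min_le_left _ _
  set m := 2 * r' - 1 - ε with hmdef
  have hm0 : 0 ≤ m := by rw [hmdef]; linarith
  have hmr' : m ≤ r' := by rw [hmdef]; linarith
  have hApos : 0 < A := by rw [hA']; linarith
  set f := fun w => (mobE a ε w)⁻¹ with hf
  have hInt : ∀ u v : ℝ, IntervalIntegrable f volume u v := fun u v =>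
    (inv_mobE_continuous ha hε0).intervalIntegrable u v
  have key : ∀ w ∈ Icc m r', (2 * (4 * A) ^ a)⁻¹ ≤ f w := by
    intro w hw
    have hwle : mobE a ε w ≤ 2 * (4 * A) ^ a := by
      have h1 := mobE_le ha hε0 w
      have habs : |w| = w := abs_of_nonneg (le_trans hm0 hw.1)
      have h2 : 2 * (max (1 - |w|) 0 + ε) ≤ 4 * A := by
        rw [habs]
        have hmax : max (1 - w) 0 ≤ 1 - m := by
          apply max_le
          · linarith [hw.1]
          · linarith
        have h2A : 1 - m + ε = 2 * A := by rw [hA', hmdef]; ring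
        linarith
      calc mobE a ε w ≤ (2 * (max (1 - |w|) 0 + ε)) ^ a + ε ^ a := h1
        _ ≤ (4 * A) ^ a + A ^ a := add_le_add
            (Real.rpow_le_rpow (by positivity) h2 ha.le)
            (Real.rpow_le_rpow hε0.le (by rw [hA']; linarith) ha.le)
        _ ≤ (4 * A) ^ a + (4 * A) ^ a := by
            have := Real.rpow_le_rpow hApos.le (by linarith : A ≤ 4 * A) ha.le
            linarith
        _ = 2 * (4 * A) ^ a := by ring
    exact inv_anti₀ (mobE_pos hε0 w) hwle
  have hsplit : psiE' a ε r
      = (∫ w in (0:ℝ)..m, f w) + (∫ w in m..r', f w) + (∫ w in r'..r, f w) := by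
    unfold psiE'
    rw [← intervalIntegral.integral_add_adjacent_intervals (hInt 0 r') (hInt r' r),
        ← intervalIntegral.integral_add_adjacent_intervals (hInt 0 m) (hInt m r')]
  have h01 : 0 ≤ ∫ w in (0:ℝ)..m, f w :=
    intervalIntegral.integral_nonneg hm0 fun u _ => inv_nonneg.2 (mobE_pos hε0 u).le
  have h03 : 0 ≤ ∫ w in r'..r, f w :=
    intervalIntegral.integral_nonneg hr'r fun u _ => inv_nonneg.2 (mobE_pos hε0 u).le
  have hmid : (r' - m) * (2 * (4 * A) ^ a)⁻¹ ≤ ∫ w in m..r', f w := by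
    have := intervalIntegral.integral_mono_on (f := fun _ => (2 * (4 * A) ^ a)⁻¹)
      hmr' intervalIntegrable_const (hInt m r') key
    rwa [intervalIntegral.integral_const, smul_eq_mul] at this
  have hrm : r' - m = A := by rw [hA', hmdef]; ring
  have halg : (2 * 4 ^ a)⁻¹ * A ^ (1 - a) = A * (2 * (4 * A) ^ a)⁻¹ := by
    rw [Real.mul_rpow (by norm_num) hApos.le, Real.rpow_sub hApos, Real.rpow_one,
        show (2:ℝ) * ((4:ℝ) ^ a * A ^ a) = (2 * 4 ^ a) * A ^ a by ring, mul_inv,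
        div_eq_mul_inv]
    ring
  rw [hrm] at hmid
  rw [hsplit, halg]
  linarith

/-- for ς, ζ ≥ 1 with ς + ζ > 2 there is K > 0 such that for all
ε ∈ (0,1) and r ∈ ℝ,
`Ψ'_{ς,ε}(r) · Ψ'_{ζ,ε}(r) ≥ K Ψ''_{ς+ζ-2,ε}(r) − K⁻¹`, with `Ψ'' = 1/m`. -/
theorem stmt9 (ς ζ : ℝ) (hς : 1 ≤ ς) (hζ : 1 ≤ ζ) (hsum : 2 < ς + ζ) :
    ∃ K > (0:ℝ), ∀ ε ∈ Ioo (0:ℝ) 1, ∀ r : ℝ,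
      K * (mobE (ς + ζ - 2) ε r)⁻¹ - K⁻¹ ≤ psiE' ς ε r * psiE' ζ ε r := by
  have hςp : 0 < ς := by linarith
  have hζp : 0 < ζ := by linarith
  have hσ : 0 < ς + ζ - 2 := by linarith
  set σ := ς + ζ - 2 with hσdef
  set c1 : ℝ := (2 * (4:ℝ) ^ ς)⁻¹ with hc1
  set c2 : ℝ := (2 * (4:ℝ) ^ ζ)⁻¹ with hc2
  have h4σ : (0:ℝ) < (4:ℝ) ^ σ := Real.rpow_pos_of_pos (by norm_num) σ
  have h8σ : (0:ℝ) < (8:ℝ) ^ σ := Real.rpow_pos_of_pos (by norm_num) σ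
  have hc1p : 0 < c1 := by
    rw [hc1]
    have : (0:ℝ) < (4:ℝ) ^ ς := Real.rpow_pos_of_pos (by norm_num) ς
    positivity
  have hc2p : 0 < c2 := by
    rw [hc2]
    have : (0:ℝ) < (4:ℝ) ^ ζ := Real.rpow_pos_of_pos (by norm_num) ζ
    positivity
  set K := min (c1 * c2 * ((4:ℝ) ^ σ)⁻¹) (min 1 ((8:ℝ) ^ σ)⁻¹) with hK
  have hKp : 0 < K := lt_min (by positivity) (lt_min one_pos (inv_pos.2 h8σ))
  refine ⟨K, hKp, ?_⟩
  intro ε hε r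
  obtain ⟨hε0, hε1⟩ := hε
  suffices H : ∀ t, 0 ≤ t → K * (mobE σ ε t)⁻¹ - K⁻¹ ≤ psiE' ς ε t * psiE' ζ ε t by
    rcases le_total 0 r with h | h
    · exact H r h
    · have h2 := H (-r) (by linarith)
      rw [mobE_even, psiE'_neg, psiE'_neg, neg_mul_neg] at h2
      exact h2
  intro t ht
  set A := max (1 - t) 0 + ε with hA
  have hApos : 0 < A := add_pos_of_nonneg_of_pos (le_max_right _ _) hε0
  have hge := mobE_ge hσ hε0 t
  rw [abs_of_nonneg ht] at hge
  have hinv : (mobE σ ε t)⁻¹ ≤ ((A / 4) ^ σ)⁻¹ :=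
    inv_anti₀ (Real.rpow_pos_of_pos (by positivity) σ) hge
  have hid : ((A / 4) ^ σ)⁻¹ = 4 ^ σ * A ^ (-σ) := by
    rw [Real.div_rpow hApos.le (by norm_num), Real.rpow_neg hApos.le, inv_div,
      div_eq_mul_inv]
  rcases le_or_gt ((1 + ε) / 2) t with hc | hc
  · have h1 := psiE'_lb hςp hε0 hε1 hc
    have h2 := psiE'_lb hζp hε0 hε1 hc
    have hp1 : 0 < c1 * A ^ (1 - ς) := mul_pos hc1p (Real.rpow_pos_of_pos hApos _)
    have hp2 : 0 < c2 * A ^ (1 - ζ) := mul_pos hc2p (Real.rpow_pos_of_pos hApos _)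
    have hmul : (c1 * A ^ (1 - ς)) * (c2 * A ^ (1 - ζ)) ≤ psiE' ς ε t * psiE' ζ ε t :=
      mul_le_mul h1 h2 hp2.le (hp1.le.trans h1)
    have hpow : A ^ (1 - ς) * A ^ (1 - ζ) = A ^ (-σ) := by
      rw [← Real.rpow_add hApos]
      congr 1
      rw [hσdef]; ring
    have hprod : (c1 * A ^ (1 - ς)) * (c2 * A ^ (1 - ζ)) = c1 * c2 * A ^ (-σ) := by
      rw [mul_mul_mul_comm, hpow]
    calc K * (mobE σ ε t)⁻¹ - K⁻¹ ≤ K * (mobE σ ε t)⁻¹ :=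
          sub_le_self _ (inv_nonneg.2 hKp.le)
      _ ≤ K * (4 ^ σ * A ^ (-σ)) :=
          mul_le_mul_of_nonneg_left (hinv.trans (le_of_eq hid)) hKp.le
      _ ≤ (c1 * c2 * ((4:ℝ) ^ σ)⁻¹) * (4 ^ σ * A ^ (-σ)) := by
          refine mul_le_mul_of_nonneg_right (min_le_left _ _) ?_
          have := Real.rpow_pos_of_pos hApos (-σ)
          positivity
      _ = c1 * c2 * A ^ (-σ) := by
          field_simp
      _ = (c1 * A ^ (1 - ς)) * (c2 * A ^ (1 - ζ)) := hprod.symm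
      _ ≤ _ := hmul
  · have hA2 : (1:ℝ) / 2 ≤ A := by
      have h3 : (1:ℝ) - t ≤ max (1 - t) 0 := le_max_left _ _
      rw [hA]; linarith
    have hAσ : A ^ (-σ) ≤ ((1:ℝ) / 2) ^ (-σ) :=
      Real.rpow_le_rpow_of_nonpos (by norm_num) hA2 (by linarith)
    have h12 : ((1:ℝ) / 2) ^ (-σ) = (2:ℝ) ^ σ := by
      rw [one_div, Real.inv_rpow (by norm_num : (0:ℝ) ≤ 2),
        Real.rpow_neg (by norm_num : (0:ℝ) ≤ 2), inv_inv]
    have hbound : (mobE σ ε t)⁻¹ ≤ (8:ℝ) ^ σ := by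
      have h42 : (4:ℝ) ^ σ * (2:ℝ) ^ σ = (8:ℝ) ^ σ := by
        rw [← Real.mul_rpow (by norm_num) (by norm_num)]
        norm_num
      calc (mobE σ ε t)⁻¹ ≤ 4 ^ σ * A ^ (-σ) := hinv.trans (le_of_eq hid)
        _ ≤ 4 ^ σ * ((1:ℝ) / 2) ^ (-σ) := mul_le_mul_of_nonneg_left hAσ h4σ.le
        _ = 8 ^ σ := by rw [h12, h42]
    have hK8 : K * (8:ℝ) ^ σ ≤ 1 := by
      have h1 : K ≤ ((8:ℝ) ^ σ)⁻¹ := le_trans (min_le_right _ _) (min_le_right _ _)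
      calc K * (8:ℝ) ^ σ ≤ ((8:ℝ) ^ σ)⁻¹ * (8:ℝ) ^ σ :=
            mul_le_mul_of_nonneg_right h1 h8σ.le
        _ = 1 := inv_mul_cancel₀ h8σ.ne'
    have hK1 : (1:ℝ) ≤ K⁻¹ := by
      have h1 : K ≤ 1 := le_trans (min_le_right _ _) (min_le_left _ _)
      simpa using inv_anti₀ hKp h1
    have hfinal : K * (mobE σ ε t)⁻¹ - K⁻¹ ≤ 0 := by
      have := mul_le_mul_of_nonneg_left hbound hKp.le
      linarith
    exact hfinal.trans (psiE'_mul_nonneg hε0 t)
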